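/- Let G₁ and G₂ be groups and ρ : G₁ ∗ G₂ → ℂ* a character of their free product, with restrictions ρ₁ and ρ₂ to G₁ and G₂ respectively (via the canonical inclusions). Assume H¹(G₁, ℂ_{ρ₁}) and H¹(G₂, ℂ_{ρ₂}) are finite-dimensional over ℂ. Then H¹(G₁ ∗ G₂, ℂ_ρ) is finite-dimensional and dim H¹(G₁ ∗ G₂, ℂ_ρ) = dim H¹(G₁, ℂ_{ρ₁}) + dim H¹(G₂, ℂ_{ρ₂}) + ε, where ε = 1 if both ρ₁ and ρ₂ are nontrivial, and ε = 0 otherwise. -/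

import Mathlib

open Module groupCohomology

/-- The rank-one representation `ℂ_ρ` of `G` determined by a character `ρ : G → ℂ*`:
`g` acts on `ℂ` as multiplication by `ρ(g)`. -/
def charRep {G : Type} [Group G] (ρ : G →* ℂˣ) : Representation ℂ G ℂ :=
  (Algebra.lmul ℂ ℂ).toRingHom.toMonoidHom.comp ((Units.coeHom ℂ).comp ρ)

/-- Let `ρ` be a character of the free product `G₁ ∗ G₂`, with restrictions
`ρ₁`, `ρ₂` to the factors.  If `H¹(G₁, ℂ_{ρ₁})` and `H¹(G₂, ℂ_{ρ₂})` are finite-dimensional,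
then `H¹(G₁ ∗ G₂, ℂ_ρ)` is finite-dimensional, of dimension
`dim H¹(G₁, ℂ_{ρ₁}) + dim H¹(G₂, ℂ_{ρ₂}) + ε`, where `ε = 1` if both `ρ₁` and `ρ₂` are
nontrivial and `ε = 0` otherwise. -/
noncomputable def phi : ℂˣ →* MulAut (Multiplicative ℂ) where
  toFun u := AddEquiv.toMultiplicative (DistribMulAction.toAddAut ℂˣ ℂ u)
  map_one' := by ext x; simp
  map_mul' u v := by ext x; simp [mul_smul]

variable {G H : Type} [Group G] [Group H]

/-- the underlying function of a cocycle, valued in `ℂ` -/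
def cval {σ : G →* ℂˣ} (f : cocycles₁ (Rep.of (charRep σ))) : G → ℂ := f.1

lemma cval_mul {σ : G →* ℂˣ} (f : cocycles₁ (Rep.of (charRep σ))) (g h : G) :
    cval f (g * h) = (σ g : ℂ) * cval f h + cval f g :=
  (mem_cocycles₁_iff (A := Rep.of (charRep σ)) f.1).1 f.2 g h

lemma cval_one {σ : G →* ℂˣ} (f : cocycles₁ (Rep.of (charRep σ))) : cval f 1 = 0 :=
  cocycles₁_map_one f

noncomputable def cocHom (σ : G →* ℂˣ) (f : cocycles₁ (Rep.of (charRep σ))) :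
    G →* SemidirectProduct (Multiplicative ℂ) ℂˣ phi where
  toFun g := ⟨Multiplicative.ofAdd (cval f g), σ g⟩
  map_one' := by
    ext
    · exact congrArg Multiplicative.ofAdd (cval_one f)
    · simp
  map_mul' g h := by
    ext
    · show Multiplicative.ofAdd (cval f (g * h)) =
        Multiplicative.ofAdd (cval f g + (σ g : ℂ) * cval f h)
      rw [cval_mul]; ring_nf
    · simp

noncomputable def resCoc (σ : G →* ℂˣ) (j : H →* G) :
    cocycles₁ (Rep.of (charRep σ)) →ₗ[ℂ] cocycles₁ (Rep.of (charRep (σ.comp j))) where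
  toFun f := ⟨fun h => cval f (j h), by
    rw [mem_cocycles₁_iff]
    intro g h
    show cval f (j (g * h)) = (σ (j g) : ℂ) * cval f (j h) + cval f (j g)
    rw [map_mul]; exact cval_mul f (j g) (j h)⟩
  map_add' f g := rfl
  map_smul' c f := rfl
open Module groupCohomology Monoid

variable {G₁ G₂ : Type} [Group G₁] [Group G₂] (ρ : Monoid.Coprod G₁ G₂ →* ℂˣ)

noncomputable def resBoth :
    cocycles₁ (Rep.of (charRep ρ)) →ₗ[ℂ]
      cocycles₁ (Rep.of (charRep (ρ.comp Coprod.inl))) ×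
      cocycles₁ (Rep.of (charRep (ρ.comp Coprod.inr))) :=
  (resCoc ρ Coprod.inl).prod (resCoc ρ Coprod.inr)

lemma resBoth_bij : Function.Bijective (resBoth ρ) := by
  constructor
  · intro f f' hff'
    have h1 := congrArg Prod.fst hff'
    have h2 := congrArg Prod.snd hff'
    have key : cocHom ρ f = cocHom ρ f' := by
      apply Coprod.hom_ext
      · ext g
        · exact congrArg Multiplicative.ofAdd (congrFun (congrArg (fun x => cval x) h1) g)
        · rfl
      · ext g
        · exact congrArg Multiplicative.ofAdd (congrFun (congrArg (fun x => cval x) h2) g)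
        · rfl
    apply Subtype.ext
    funext g
    exact congrArg (fun Φ => Multiplicative.toAdd ((Φ : _ →* _) g).left) key
  · rintro ⟨f₁, f₂⟩
    set Φ := Coprod.lift (cocHom _ f₁) (cocHom _ f₂) with hΦ
    have hright : SemidirectProduct.rightHom.comp Φ = ρ := Coprod.hom_ext rfl rfl
    have hr : ∀ g, ((Φ g).right : ℂˣ) = ρ g := fun g => DFunLike.congr_fun hright g
    have hmem : (fun g => Multiplicative.toAdd (Φ g).left) ∈
        cocycles₁ (Rep.of (charRep ρ)) := by
      rw [mem_cocycles₁_iff]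
      intro g h
      show Multiplicative.toAdd (Φ (g * h)).left =
        (ρ g : ℂ) * Multiplicative.toAdd (Φ h).left + Multiplicative.toAdd (Φ g).left
      rw [map_mul, SemidirectProduct.mul_left]
      show Multiplicative.toAdd (Φ g).left + ((Φ g).right : ℂ) * Multiplicative.toAdd (Φ h).left = _
      rw [hr g]; ring
    refine ⟨⟨_, hmem⟩, ?_⟩
    apply Prod.ext
    · apply Subtype.ext
      funext g
      show Multiplicative.toAdd (Φ (Coprod.inl g)).left = cval f₁ g
      rw [hΦ, Coprod.lift_apply_inl]
      rfl
    · apply Subtype.ext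
      funext g
      show Multiplicative.toAdd (Φ (Coprod.inr g)).left = cval f₂ g
      rw [hΦ, Coprod.lift_apply_inr]
      rfl
section B
variable {G : Type} [Group G] (σ : G →* ℂˣ)

noncomputable abbrev oneCoboundaries (A : Rep ℂ G) : Submodule ℂ (cocycles₁ A) :=
  LinearMap.range ((d₀₁ A).hom.codRestrict (cocycles₁ A) (fun c => d₀₁_apply_mem_cocycles₁ c))

noncomputable def bmap : ℂ →ₗ[ℂ] cocycles₁ (Rep.of (charRep σ)) :=
  (d₀₁ (Rep.of (charRep σ))).hom.codRestrict (cocycles₁ (Rep.of (charRep σ)))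
    (fun c => d₀₁_apply_mem_cocycles₁ (A := Rep.of (charRep σ)) c)

lemma range_bmap : LinearMap.range (bmap σ) = oneCoboundaries (Rep.of (charRep σ)) := rfl

instance : FiniteDimensional ℂ (oneCoboundaries (Rep.of (charRep σ))) := by
  rw [← range_bmap]
  infer_instance

lemma finrank_bdry_triv (hσ : σ = 1) :
    finrank ℂ (oneCoboundaries (Rep.of (charRep σ))) = 0 := by
  subst hσ
  have : (charRep (1 : G →* ℂˣ)).IsTrivial := ⟨fun g => LinearMap.ext fun x => one_mul x⟩
  rw [← range_bmap, LinearMap.range_eq_bot.2, finrank_bot]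
  apply LinearMap.ext; intro c; apply Subtype.ext; funext g
  show charRep (1 : G →* ℂˣ) g c - c = 0
  simp [charRep]

lemma finrank_bdry_nontriv (hσ : σ ≠ 1) :
    finrank ℂ (oneCoboundaries (Rep.of (charRep σ))) = 1 := by
  obtain ⟨g₀, hg₀⟩ := DFunLike.ne_iff.mp hσ
  have hker : LinearMap.ker (bmap σ) = ⊥ := by
    rw [LinearMap.ker_eq_bot']
    intro x hx
    have : (d₀₁ (Rep.of (charRep σ))).hom x = 0 := congrArg Subtype.val hx
    have h2 : (σ g₀ : ℂ) * x - x = 0 := congrFun this g₀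
    have h3 : ((σ g₀ : ℂ) - 1) * x = 0 := by ring_nf; ring_nf at h2; exact h2
    rcases mul_eq_zero.1 h3 with h | h
    · exact absurd (Units.ext (by simpa [sub_eq_zero] using h)) hg₀
    · exact h
  have := LinearMap.finrank_range_add_finrank_ker (bmap σ)
  rw [hker, finrank_bot, range_bmap, finrank_self] at this
  omega

lemma fd_of_sub_quot {V : Type*} [AddCommGroup V] [Module ℂ V] (N : Submodule ℂ V)
    [FiniteDimensional ℂ N] [FiniteDimensional ℂ (V ⧸ N)] : FiniteDimensional ℂ V := by
  apply Module.finite_def.mpr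
  apply Submodule.fg_of_fg_map_of_fg_inf_ker N.mkQ
  · rw [Submodule.map_top, Submodule.range_mkQ]
    exact Module.finite_def.mp inferInstance
  · rw [top_inf_eq, Submodule.ker_mkQ]
    exact (Submodule.fg_iff_finiteDimensional N).mpr inferInstance

end B
section final
variable {G : Type} [Group G]

noncomputable def cohEquiv (σ : G →* ℂˣ) :
    (groupCohomology (Rep.of (charRep σ)) 1) ≃ₗ[ℂ] (cocycles₁ (Rep.of (charRep σ)) ⧸ oneCoboundaries (Rep.of (charRep σ))) :=
  (groupCohomology.H1Iso (Rep.of (charRep σ))).toLinearEquiv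

lemma fd_coh (σ : G →* ℂˣ) [FiniteDimensional ℂ (cocycles₁ (Rep.of (charRep σ)))] :
    FiniteDimensional ℂ (groupCohomology (Rep.of (charRep σ)) 1) :=
  (cohEquiv σ).symm.finiteDimensional

lemma fd_Z_of_coh (σ : G →* ℂˣ)
    (h : FiniteDimensional ℂ (groupCohomology (Rep.of (charRep σ)) 1)) :
    FiniteDimensional ℂ (cocycles₁ (Rep.of (charRep σ))) := by
  have : FiniteDimensional ℂ (cocycles₁ (Rep.of (charRep σ)) ⧸ oneCoboundaries (Rep.of (charRep σ))) := (cohEquiv σ).finiteDimensional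
  exact fd_of_sub_quot (oneCoboundaries (Rep.of (charRep σ)))

lemma finrank_coh_eq (σ : G →* ℂˣ)
    [FiniteDimensional ℂ (cocycles₁ (Rep.of (charRep σ)))] :
    finrank ℂ (groupCohomology (Rep.of (charRep σ)) 1) +
      finrank ℂ (oneCoboundaries (Rep.of (charRep σ))) =
      finrank ℂ (cocycles₁ (Rep.of (charRep σ))) := by
  rw [(cohEquiv σ).finrank_eq]
  exact Submodule.finrank_quotient_add_finrank _

end final


theorem stmt_6 (G₁ G₂ : Type) [Group G₁] [Group G₂]
    (ρ : Monoid.Coprod G₁ G₂ →* ℂˣ)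
    (h₁ : FiniteDimensional ℂ
      (groupCohomology (Rep.of (charRep (ρ.comp Monoid.Coprod.inl))) 1))
    (h₂ : FiniteDimensional ℂ
      (groupCohomology (Rep.of (charRep (ρ.comp Monoid.Coprod.inr))) 1)) :
    FiniteDimensional ℂ (groupCohomology (Rep.of (charRep ρ)) 1) ∧
    (ρ.comp Monoid.Coprod.inl ≠ 1 ∧ ρ.comp Monoid.Coprod.inr ≠ 1 →
      finrank ℂ (groupCohomology (Rep.of (charRep ρ)) 1) =
        finrank ℂ (groupCohomology (Rep.of (charRep (ρ.comp Monoid.Coprod.inl))) 1) +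
        finrank ℂ (groupCohomology (Rep.of (charRep (ρ.comp Monoid.Coprod.inr))) 1) + 1) ∧
    (ρ.comp Monoid.Coprod.inl = 1 ∨ ρ.comp Monoid.Coprod.inr = 1 →
      finrank ℂ (groupCohomology (Rep.of (charRep ρ)) 1) =
        finrank ℂ (groupCohomology (Rep.of (charRep (ρ.comp Monoid.Coprod.inl))) 1) +
        finrank ℂ (groupCohomology (Rep.of (charRep (ρ.comp Monoid.Coprod.inr))) 1)) := by
  have fdZ₁ := fd_Z_of_coh _ h₁
  have fdZ₂ := fd_Z_of_coh _ h₂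
  have eqv := LinearEquiv.ofBijective (resBoth ρ) (resBoth_bij ρ)
  have fdZ : FiniteDimensional ℂ (cocycles₁ (Rep.of (charRep ρ))) :=
    eqv.symm.finiteDimensional
  have hz : finrank ℂ (cocycles₁ (Rep.of (charRep ρ))) =
      finrank ℂ (cocycles₁ (Rep.of (charRep (ρ.comp Monoid.Coprod.inl)))) +
      finrank ℂ (cocycles₁ (Rep.of (charRep (ρ.comp Monoid.Coprod.inr)))) := by
    rw [eqv.finrank_eq, Module.finrank_prod]
  have key := finrank_coh_eq ρ
  have key₁ := finrank_coh_eq (ρ.comp Monoid.Coprod.inl)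
  have key₂ := finrank_coh_eq (ρ.comp Monoid.Coprod.inr)
  refine ⟨fd_coh ρ, ?_, ?_⟩
  · rintro ⟨hn1, hn2⟩
    have hρ : ρ ≠ 1 := fun h => hn1 (by rw [h, MonoidHom.one_comp])
    rw [finrank_bdry_nontriv _ hρ] at key
    rw [finrank_bdry_nontriv _ hn1] at key₁
    rw [finrank_bdry_nontriv _ hn2] at key₂
    omega
  · rintro (h | h)
    · by_cases h2 : ρ.comp Monoid.Coprod.inr = 1
      · have hρ : ρ = 1 := Monoid.Coprod.hom_ext
          (by rw [MonoidHom.one_comp]; exact h) (by rw [MonoidHom.one_comp]; exact h2)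
        rw [finrank_bdry_triv _ hρ] at key
        rw [finrank_bdry_triv _ h] at key₁
        rw [finrank_bdry_triv _ h2] at key₂
        omega
      · have hρ : ρ ≠ 1 := fun hh => h2 (by rw [hh, MonoidHom.one_comp])
        rw [finrank_bdry_nontriv _ hρ] at key
        rw [finrank_bdry_triv _ h] at key₁
        rw [finrank_bdry_nontriv _ h2] at key₂
        omega
    · by_cases h2 : ρ.comp Monoid.Coprod.inl = 1
      · have hρ : ρ = 1 := Monoid.Coprod.hom_ext
          (by rw [MonoidHom.one_comp]; exact h2) (by rw [MonoidHom.one_comp]; exact h)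
        rw [finrank_bdry_triv _ hρ] at key
        rw [finrank_bdry_triv _ h2] at key₁
        rw [finrank_bdry_triv _ h] at key₂
        omega
      · have hρ : ρ ≠ 1 := fun hh => h2 (by rw [hh, MonoidHom.one_comp])
        rw [finrank_bdry_nontriv _ hρ] at key
        rw [finrank_bdry_nontriv _ h2] at key₁
        rw [finrank_bdry_triv _ h] at key₂
        omega
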